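/- Let T be a tree (a set of finite sequences of natural numbers containing the empty sequence and closed under initial segments), and let G(T) be the abelian group generated by the nodes of T subject to the relations that the root equals 0 and, for every nonroot node x, p·x equals the immediate predecessor of x in T (formally, G(T) is the quotient of the free abelian group on T by the subgroup generated by the root and all elements p·x − pred(x) for nonroot nodes x). Then G(T) is an abelian p-group, and G(T) is reduced if and only if T has no infinite path. -/

import Mathlib

open Ordinal

/-- Scalar multiplication by `p` as an additive group homomorphism. -/
def pHom (p : ℕ) (G : Type*) [AddCommGroup G] : G →+ G :=
  AddMonoidHom.mk' (fun x => p • x) (fun a b => smul_add p a b)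

@[simp] lemma pHom_apply (p : ℕ) {G : Type*} [AddCommGroup G] (x : G) :
    pHom p G x = p • x := rfl

/-- The Ulm subgroups `G_β`: `G_0 = G`, `G_{β+1} = pG_β`, and intersections at limits. -/
noncomputable def ulmSub (p : ℕ) (G : Type*) [AddCommGroup G] (β : Ordinal.{0}) :
    AddSubgroup G :=
  Ordinal.limitRecOn β ⊤ (fun _ H => AddSubgroup.map (pHom p G) H)
    (fun o _ ih => ⨅ (γ : Ordinal.{0}) (h : γ < o), ih γ h)

lemma ulmSub_succ (p : ℕ) (G : Type*) [AddCommGroup G] (β : Ordinal.{0}) :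
    ulmSub p G (β + 1) = AddSubgroup.map (pHom p G) (ulmSub p G β) := by
  unfold ulmSub
  rw [Ordinal.add_one_eq_succ, Ordinal.limitRecOn_succ]

lemma ulmSub_succ_le (p : ℕ) (G : Type*) [AddCommGroup G] (β : Ordinal.{0}) :
    ulmSub p G (β + 1) ≤ ulmSub p G β := by
  rw [ulmSub_succ]
  rintro x ⟨y, hy, rfl⟩
  simpa using (ulmSub p G β).nsmul_mem hy p

/-- An abelian `p`-group: every element is killed by some power of `p`. -/
def IsAbelianPGroup (p : ℕ) (G : Type*) [AddCommGroup G] : Prop :=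
  ∀ x : G, ∃ n : ℕ, p ^ n • x = 0

/-- The length `λ(G)`: the least ordinal `β` with `G_β = G_{β+1}`. -/
noncomputable def ulmLength (p : ℕ) (G : Type*) [AddCommGroup G] : Ordinal.{0} :=
  sInf {β : Ordinal.{0} | ulmSub p G β = ulmSub p G (β + 1)}

/-- `G` is reduced if `G_{λ(G)} = {0}`. -/
def IsReducedPGroup (p : ℕ) (G : Type*) [AddCommGroup G] : Prop :=
  ulmSub p G (ulmLength p G) = ⊥

/-- `P_β(G) = {x ∈ G_β : px = 0}`. -/
noncomputable def ulmP (p : ℕ) (G : Type*) [AddCommGroup G] (β : Ordinal.{0}) : AddSubgroup G :=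
  (pHom p G).ker ⊓ ulmSub p G β

/-- The quotient `P_β(G)/P_{β+1}(G)` (as a quotient of `P_β(G)` by the subgroup
corresponding to `P_{β+1}(G)`). -/
noncomputable def ulmQuot (p : ℕ) (G : Type*) [AddCommGroup G] (β : Ordinal.{0}) :=
  (ulmP p G β) ⧸ ((ulmP p G (β + 1)).addSubgroupOf (ulmP p G β))

noncomputable instance (p : ℕ) (G : Type*) [AddCommGroup G] (β : Ordinal.{0}) :
    AddCommGroup (ulmQuot p G β) :=
  inferInstanceAs (AddCommGroup ((ulmP p G β) ⧸ ((ulmP p G (β + 1)).addSubgroupOf (ulmP p G β))))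

noncomputable instance (p : ℕ) (G : Type*) [AddCommGroup G] (β : Ordinal.{0}) :
    Module (ZMod p) (ulmQuot p G β) :=
  QuotientAddGroup.zmodModule (by
    intro x
    simp only [AddSubgroup.mem_addSubgroupOf]
    have hx : ((p • x : ulmP p G β) : G) = 0 := by
      have : (x : G) ∈ (pHom p G).ker := x.2.1
      simp only [AddMonoidHom.mem_ker, pHom_apply] at this
      simpa using this
    rw [hx]
    exact (ulmP p G (β + 1)).zero_mem)

/-- The Ulm invariant `u_β(G)`: the dimension of `P_β(G)/P_{β+1}(G)` over `ℤ/pℤ`. -/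
noncomputable def ulmInvariant (p : ℕ) (G : Type*) [AddCommGroup G] (β : Ordinal.{0}) :
    Cardinal :=
  Module.rank (ZMod p) (ulmQuot p G β)

open Classical in
/-- The height of `x`: the unique ordinal `β` with `x ∈ G_β \ G_{β+1}` if it exists, and `∞`
(= `⊤`) otherwise. -/
noncomputable def height (p : ℕ) {G : Type*} [AddCommGroup G] (x : G) : WithTop Ordinal.{0} :=
  if ∃ β : Ordinal.{0}, x ∈ ulmSub p G β ∧ x ∉ ulmSub p G (β + 1) then
    ((sInf {β : Ordinal.{0} | x ∈ ulmSub p G β ∧ x ∉ ulmSub p G (β + 1)} : Ordinal.{0}) :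
      WithTop Ordinal.{0})
  else ⊤

/-- `d` is proper with respect to `S` if `h(d) ≥ h(d+s)` for every `s ∈ S`. -/
def ProperWRT (p : ℕ) {G : Type*} [AddCommGroup G] (S : AddSubgroup G) (d : G) : Prop :=
  ∀ s ∈ S, height p (d + s) ≤ height p d

/-- The relations defining `G(T)`: the root is `0`, and `p·x = pred(x)` for nonroot nodes. -/
def treeRelSet (p : ℕ) (T : Set (List ℕ)) : Set (FreeAbelianGroup T) :=
  {z | (∃ h : ([] : List ℕ) ∈ T, z = FreeAbelianGroup.of (⟨[], h⟩ : T)) ∨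
    ∃ (l : T) (h : (l : List ℕ).dropLast ∈ T), (l : List ℕ) ≠ [] ∧
      z = p • FreeAbelianGroup.of l -
          FreeAbelianGroup.of (⟨(l : List ℕ).dropLast, h⟩ : T)}

/-- `G(T)`: the quotient of the free abelian group on `T` by the subgroup generated by the
root and the elements `p·x − pred(x)` for nonroot nodes `x`. -/
def treeGroup (p : ℕ) (T : Set (List ℕ)) : Type :=
  FreeAbelianGroup T ⧸ AddSubgroup.closure (treeRelSet p T)

instance (p : ℕ) (T : Set (List ℕ)) : AddCommGroup (treeGroup p T) :=
  inferInstanceAs (AddCommGroup (FreeAbelianGroup T ⧸ AddSubgroup.closure (treeRelSet p T)))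

section Generic
variable (p : ℕ) (G : Type*) [AddCommGroup G]

lemma ulmSub_zero' : ulmSub p G 0 = ⊤ := by
  unfold ulmSub; rw [Ordinal.limitRecOn_zero]

lemma ulmSub_limit' (β : Ordinal.{0}) (h : Order.IsSuccLimit β) :
    ulmSub p G β = ⨅ (γ : Ordinal.{0}) (_ : γ < β), ulmSub p G γ := by
  unfold ulmSub; rw [Ordinal.limitRecOn_limit _ _ _ _ h]

lemma ulmSub_anti : ∀ β γ : Ordinal.{0}, γ ≤ β → ulmSub p G β ≤ ulmSub p G γ := by
  intro β
  induction β using Ordinal.limitRecOn with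
  | zero => intro γ hγ; rw [nonpos_iff_eq_zero.mp hγ]
  | add_one β ih =>
    intro γ hγ
    rcases eq_or_lt_of_le hγ with rfl | h
    · exact le_rfl
    · exact le_trans (ulmSub_succ_le p G β) (ih γ (Order.lt_succ_iff.mp (by rwa [Ordinal.add_one_eq_succ] at h)))
  | limit β hβ ih =>
    intro γ hγ
    rcases eq_or_lt_of_le hγ with rfl | h
    · exact le_rfl
    · rw [ulmSub_limit' p G β hβ]
      exact iInf_le_of_le γ (iInf_le_of_le h le_rfl)

lemma ulmSub_stab (lam : Ordinal.{0}) (hstab : ulmSub p G lam = ulmSub p G (lam + 1)) :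
    ∀ β : Ordinal.{0}, lam ≤ β → ulmSub p G β = ulmSub p G lam := by
  intro β
  induction β using Ordinal.limitRecOn with
  | zero => intro h; rw [nonpos_iff_eq_zero.mp h]
  | add_one β ih =>
    intro h
    rcases eq_or_lt_of_le h with h' | h'
    · rw [← h']
    · have hb : lam ≤ β := Order.lt_succ_iff.mp (by rwa [Ordinal.add_one_eq_succ] at h')
      rw [ulmSub_succ, ih hb, ← ulmSub_succ, ← hstab]
  | limit β hβ ih =>
    intro h
    rcases eq_or_lt_of_le h with h' | h'
    · rw [← h']
    · rw [ulmSub_limit' p G β hβ]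
      apply le_antisymm
      · exact iInf_le_of_le lam (iInf_le_of_le h' le_rfl)
      · refine le_iInf fun γ => le_iInf fun hγ => ?_
        rcases le_total lam γ with hc | hc
        · rw [ih γ hγ hc]
        · exact ulmSub_anti p G lam γ hc

end Generic

section Tree

variable (p : ℕ) (T : Set (List ℕ))

/-- The root node. -/
def trRoot (hroot : ([] : List ℕ) ∈ T) : T := ⟨[], hroot⟩

variable (hroot : ([] : List ℕ) ∈ T)
    (hclosed : ∀ l ∈ T, ∀ l' : List ℕ, l' <+: l → l' ∈ T)

/-- The predecessor of a node (the root maps to itself). -/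
def trPred (x : T) : T := ⟨x.1.dropLast, hclosed x.1 x.2 _ x.1.dropLast_prefix⟩

lemma trPred_root : trPred T hclosed (trRoot T hroot) = trRoot T hroot := rfl

lemma trPred_length {x : T} (hx : x ≠ trRoot T hroot) :
    (trPred T hclosed x).1.length + 1 = x.1.length := by
  have hne : x.1 ≠ [] := fun h => hx (Subtype.ext h)
  have : 0 < x.1.length := List.length_pos_iff.mpr hne
  simp only [trPred, List.length_dropLast]
  omega
  
/-- The quotient map onto the tree group. -/
def trQ : FreeAbelianGroup T →+ treeGroup p T := QuotientAddGroup.mk' _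

/-- The generators of the tree group. -/
def trG (x : T) : treeGroup p T := trQ p T (FreeAbelianGroup.of x)

lemma trG_root : trG p T (trRoot T hroot) = 0 := by
  have h : FreeAbelianGroup.of (trRoot T hroot) ∈ AddSubgroup.closure (treeRelSet p T) :=
    AddSubgroup.subset_closure (Or.inl ⟨hroot, rfl⟩)
  exact (QuotientAddGroup.eq_zero_iff _).mpr h

include hroot in
lemma trG_pred (x : T) : p • trG p T x = trG p T (trPred T hclosed x) := by
  by_cases hx : x = trRoot T hroot
  · subst hx
    rw [trPred_root, trG_root p T hroot, smul_zero]
  · have hne : x.1 ≠ [] := fun h => hx (Subtype.ext h)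
    have h : p • FreeAbelianGroup.of x - FreeAbelianGroup.of (trPred T hclosed x) ∈
        AddSubgroup.closure (treeRelSet p T) :=
      AddSubgroup.subset_closure (Or.inr ⟨x, (trPred T hclosed x).2, hne, rfl⟩)
    have h2 : ((p • FreeAbelianGroup.of x : FreeAbelianGroup T) :
        FreeAbelianGroup T ⧸ AddSubgroup.closure (treeRelSet p T)) =
        ((FreeAbelianGroup.of (trPred T hclosed x) : FreeAbelianGroup T) :
        FreeAbelianGroup T ⧸ AddSubgroup.closure (treeRelSet p T)) :=
      QuotientAddGroup.eq_iff_sub_mem.mpr h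
    show p • trQ p T (FreeAbelianGroup.of x) = _
    rw [← map_nsmul]
    exact h2

/-- Interpret a finitely-supported function as an element of the free abelian group. -/
noncomputable def trF : (T →₀ ℤ) →+ FreeAbelianGroup T :=
  Finsupp.liftAddHom fun z => zmultiplesHom _ (FreeAbelianGroup.of z)

/-- Interpret a finitely-supported function as an element of the tree group. -/
noncomputable def trS : (T →₀ ℤ) →+ treeGroup p T := (trQ p T).comp (trF T)

lemma trF_single (z : T) (m : ℤ) :
    trF T (Finsupp.single z m) = m • FreeAbelianGroup.of z := by
  simp [trF, zmultiplesHom_apply]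

lemma trS_single (z : T) (m : ℤ) : trS p T (Finsupp.single z m) = m • trG p T z := by
  simp [trS, trF_single, trG]

/-- Normal form: root coefficient zero, all coefficients in `[0, p)`. -/
def trNf (c : T →₀ ℤ) : Prop :=
  c (trRoot T hroot) = 0 ∧ ∀ z, 0 ≤ c z ∧ c z < p

/-- The weight function used to separate normal forms. -/
noncomputable def trW (x z : T) : ℚ :=
  if x.1 <+: z.1 then ((p : ℚ) ^ (z.1.length - x.1.length + 1))⁻¹ else 0

/-- The separating functionals on the free abelian group. -/
noncomputable def trX (x : T) : FreeAbelianGroup T →+ ℚ :=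
  FreeAbelianGroup.lift (trW p T x)

lemma trX_integral (hp : 2 ≤ p) {x : T} (hx : x ≠ trRoot T hroot)
    {a : FreeAbelianGroup T} (ha : a ∈ AddSubgroup.closure (treeRelSet p T)) :
    ∃ k : ℤ, trX p T x a = k := by
  have hxne : x.1 ≠ [] := fun h => hx (Subtype.ext h)
  have hmain : AddSubgroup.closure (treeRelSet p T) ≤
      AddSubgroup.comap (trX p T x) (AddSubgroup.zmultiples (1 : ℚ)) := by
    rw [AddSubgroup.closure_le]
    rintro z (⟨h0, rfl⟩ | ⟨l, h1, hlne, rfl⟩)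
    · refine AddSubgroup.mem_comap.mpr ⟨0, ?_⟩
      have : ¬ x.1 <+: ([] : List ℕ) := by
        intro h; exact hxne (List.prefix_nil.mp h)
      simp [trX, FreeAbelianGroup.lift_apply_of, trW, this]
    · refine AddSubgroup.mem_comap.mpr ?_
      have hkey : trX p T x (p • FreeAbelianGroup.of l -
          FreeAbelianGroup.of (⟨(l : List ℕ).dropLast, h1⟩ : T)) =
          p * trW p T x l - trW p T x ⟨(l : List ℕ).dropLast, h1⟩ := by
        simp [trX, map_sub, map_nsmul, FreeAbelianGroup.lift_apply_of, _root_.nsmul_eq_mul]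
      rw [hkey]
      have hplen : 0 < (l : List ℕ).length := List.length_pos_iff.mpr hlne
      by_cases hd : x.1 <+: (l : List ℕ).dropLast
      · have hxl : x.1 <+: (l : List ℕ) := hd.trans (l : List ℕ).dropLast_prefix
        have hlex : x.1.length ≤ (l : List ℕ).length - 1 := by
          have := hd.length_le
          simpa [List.length_dropLast] using this
        refine ⟨0, ?_⟩
        simp only [trW, if_pos hd, if_pos hxl, List.length_dropLast, zero_zsmul]
        have hppos : (0:ℚ) < (p:ℚ) := by positivity
        have harith : (l : List ℕ).length - x.1.length + 1 =
            ((l : List ℕ).length - 1 - x.1.length + 1) + 1 := by omega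
        rw [harith, pow_succ]
        have h0 : (p:ℚ) ^ ((l : List ℕ).length - 1 - x.1.length + 1) ≠ 0 := by positivity
        field_simp
        ring
      · by_cases hxl : x.1 <+: (l : List ℕ)
        · -- then x = l
          have hxeq : x.1 = (l : List ℕ) := by
            by_contra hne
            apply hd
            have hlt : x.1.length < (l : List ℕ).length := by
              rcases lt_or_eq_of_le hxl.length_le with h | h
              · exact h
              · exact absurd (List.IsPrefix.eq_of_length hxl h) hne
            have : x.1 <+: (l : List ℕ).take ((l : List ℕ).length - 1) := by
              rw [List.prefix_take_iff]
              exact ⟨hxl, by omega⟩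
            simpa [List.dropLast_eq_take] using this
          refine ⟨1, ?_⟩
          have hlen0 : (l : List ℕ).length - x.1.length = 0 := by rw [hxeq]; omega
          simp only [trW, if_pos hxl, if_neg hd, hlen0, pow_one, one_zsmul]
          have hppos : (p:ℚ) ≠ 0 := by positivity
          simp [hppos]
        · refine ⟨0, ?_⟩
          simp [trW, if_neg hxl, if_neg hd]
  obtain ⟨k, hk⟩ := hmain ha
  exact ⟨k, by simpa using hk.symm⟩

end Tree

section Tree2

variable (p : ℕ) (T : Set (List ℕ))
    (hroot : ([] : List ℕ) ∈ T)
    (hclosed : ∀ l ∈ T, ∀ l' : List ℕ, l' <+: l → l' ∈ T)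

lemma trS_eq_sum (c : T →₀ ℤ) : trS p T c = c.sum fun a m => m • trG p T a := by
  rw [trS, AddMonoidHom.comp_apply, trF, Finsupp.liftAddHom_apply]
  rw [map_finsuppSum]
  exact Finsupp.sum_congr fun a _ => by simp [zmultiplesHom_apply, trG]

include hroot in
lemma trNf_unique (hp : 2 ≤ p) {c d : T →₀ ℤ} (hc : trNf p T hroot c)
    (hd : trNf p T hroot d) (h : trS p T c = trS p T d) : c = d := by
  by_contra hne
  set u := c - d with hu
  have hu0 : u ≠ 0 := sub_ne_zero.mpr hne
  have hmem : trF T u ∈ AddSubgroup.closure (treeRelSet p T) := by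
    have h0 : trS p T u = 0 := by rw [hu, map_sub, h]; exact _root_.sub_self _
    exact (QuotientAddGroup.eq_zero_iff _).mp h0
  have hs : u.support.Nonempty := Finsupp.support_nonempty_iff.mpr hu0
  obtain ⟨z, hz, hmax⟩ := u.support.exists_max_image (fun z => z.1.length) hs
  have hzroot : z ≠ trRoot T hroot := by
    intro hzr
    have : u (trRoot T hroot) = 0 := by rw [hu, Finsupp.sub_apply, hc.1, hd.1]; exact _root_.sub_self _
    exact (Finsupp.mem_support_iff.mp hz) (hzr ▸ this)
  -- compute the functional
  have hval : trX p T z (trF T u) = (u z : ℚ) * (p : ℚ)⁻¹ := by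
    rw [trF, Finsupp.liftAddHom_apply, map_finsuppSum]
    rw [Finsupp.sum]
    rw [Finset.sum_eq_single z]
    · simp only [zmultiplesHom_apply, map_zsmul, trX, FreeAbelianGroup.lift_apply_of]
      have : trW p T z z = (p : ℚ)⁻¹ := by
        simp [trW, List.prefix_refl, Nat.sub_self]
      rw [this, zsmul_eq_mul]
    · intro a ha hne'
      have hw : trW p T z a = 0 := by
        rw [trW, if_neg]
        intro hpre
        have h1 : z.1.length ≤ a.1.length := hpre.length_le
        have h2 : a.1.length ≤ z.1.length := hmax a ha
        exact hne' (Subtype.ext (hpre.eq_of_length (le_antisymm h1 h2)).symm)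
      simp [zmultiplesHom_apply, map_zsmul, trX, FreeAbelianGroup.lift_apply_of, hw]
    · intro hzz; exact absurd hz hzz
  obtain ⟨k, hk⟩ := trX_integral p T hroot hp hzroot hmem
  rw [hval] at hk
  have hp0 : (p : ℚ) ≠ 0 := by positivity
  have hcast : (u z : ℚ) = (k : ℚ) * (p : ℚ) := by
    field_simp at hk
    linarith [hk]
  have hdvd : (p : ℤ) ∣ u z := ⟨k, by exact_mod_cast hcast.trans (mul_comm _ _)⟩
  have huz : u z ≠ 0 := Finsupp.mem_support_iff.mp hz
  have hlt : |u z| < p := by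
    have h1 := (hc.2 z).1; have h2 := (hc.2 z).2
    have h3 := (hd.2 z).1; have h4 := (hd.2 z).2
    rw [hu, Finsupp.sub_apply, abs_lt]
    constructor <;> omega
  have : (p : ℤ) ≤ |u z| :=
    Int.le_of_dvd (abs_pos.mpr huz) ((dvd_abs _ _).mpr hdvd)
  omega

open Classical in
/-- The set of "bad" nodes of a coefficient function. -/
noncomputable def trBad (c : T →₀ ℤ) : Finset T :=
  c.support.filter fun z => z = trRoot T hroot ∨ c z < 0 ∨ (p : ℤ) ≤ c z

/-- The termination measure for the reduction to normal form. -/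
noncomputable def trMu (c : T →₀ ℤ) : ℕ := ∑ z ∈ trBad p T hroot c, 4 ^ z.1.length

lemma trNf_of_bad_empty (hp : 0 < p) (c : T →₀ ℤ) (h : trBad p T hroot c = ∅) :
    trNf p T hroot c := by
  classical
  have hbad : ∀ z, z ∉ trBad p T hroot c := by rw [h]; exact fun z => Finset.notMem_empty z
  constructor
  · by_contra h0
    have : trRoot T hroot ∈ trBad p T hroot c := by
      rw [trBad, Finset.mem_filter]
      exact ⟨Finsupp.mem_support_iff.mpr h0, Or.inl rfl⟩
    exact hbad _ this
  · intro z
    by_cases h0 : c z = 0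
    · rw [h0]; exact ⟨le_refl 0, by exact_mod_cast hp⟩
    · have := hbad z
      rw [trBad, Finset.mem_filter, not_and_or] at this
      rcases this with h1 | h1
      · exact absurd (Finsupp.mem_support_iff.mpr h0) h1
      · push_neg at h1
        exact ⟨h1.2.1, h1.2.2⟩

end Tree2

section Tree3

variable (p : ℕ) (T : Set (List ℕ))
    (hroot : ([] : List ℕ) ∈ T)
    (hclosed : ∀ l ∈ T, ∀ l' : List ℕ, l' <+: l → l' ∈ T)

lemma mem_trBad_iff {c : T →₀ ℤ} {z : T} :
    z ∈ trBad p T hroot c ↔ c z ≠ 0 ∧ (z = trRoot T hroot ∨ c z < 0 ∨ (p : ℤ) ≤ c z) := by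
  classical
  simp [trBad, Finsupp.mem_support_iff]

include hclosed in
lemma trNf_exists_aux (hp : 2 ≤ p) (A : Set T) (hA : ∀ x ∈ A, trPred T hclosed x ∈ A) :
    ∀ (n : ℕ) (c : T →₀ ℤ), trMu p T hroot c ≤ n → (↑c.support : Set T) ⊆ A →
      ∃ d, trNf p T hroot d ∧ (↑d.support : Set T) ⊆ A ∧ trS p T c = trS p T d := by
  classical
  have hppos : 0 < p := by omega
  have hp' : (0 : ℤ) < (p : ℤ) := by exact_mod_cast hppos
  intro n
  induction n with
  | zero =>
    intro c hmu hsupp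
    have hempty : trBad p T hroot c = ∅ := by
      by_contra hne
      obtain ⟨z, hz⟩ := Finset.nonempty_iff_ne_empty.mpr hne
      have hpos : 0 < trMu p T hroot c :=
        Finset.sum_pos' (fun i _ => Nat.zero_le _) ⟨z, hz, by positivity⟩
      omega
    exact ⟨c, trNf_of_bad_empty p T hroot hppos c hempty, hsupp, rfl⟩
  | succ n ih =>
    intro c hmu hsupp
    by_cases hempty : trBad p T hroot c = ∅
    · exact ⟨c, trNf_of_bad_empty p T hroot hppos c hempty, hsupp, rfl⟩
    obtain ⟨z, hz⟩ := Finset.nonempty_iff_ne_empty.mpr hempty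
    have hzsupp : z ∈ c.support :=
      Finsupp.mem_support_iff.mpr ((mem_trBad_iff p T hroot).mp hz).1
    have hzbad := ((mem_trBad_iff p T hroot).mp hz).2
    by_cases hzr : z = trRoot T hroot
    · -- the bad node is the root: erase it
      set c' := Finsupp.erase z c with hc'
      have hSeq : trS p T c = trS p T c' := by
        have hg : trG p T z = 0 := by rw [hzr]; exact trG_root p T hroot
        conv_lhs => rw [← Finsupp.single_add_erase z c]
        rw [map_add, trS_single, hg, smul_zero, zero_add]
      have hsub : trBad p T hroot c' ⊆ (trBad p T hroot c).erase z := by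
        intro a ha
        have ha' := (mem_trBad_iff p T hroot).mp ha
        have hanez : a ≠ z := by
          intro h; subst h
          rw [hc', Finsupp.erase_same] at ha'
          exact ha'.1 rfl
        have hval : c' a = c a := Finsupp.erase_ne hanez
        rw [Finset.mem_erase]
        refine ⟨hanez, (mem_trBad_iff p T hroot).mpr ?_⟩
        rw [← hval]
        exact ha'
      have hmu' : trMu p T hroot c' ≤ n := by
        have h1 : trMu p T hroot c' ≤ ∑ a ∈ (trBad p T hroot c).erase z, 4 ^ a.1.length :=
          Finset.sum_le_sum_of_subset hsub
        have h2 : (∑ a ∈ (trBad p T hroot c).erase z, 4 ^ a.1.length) + 4 ^ z.1.length =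
            trMu p T hroot c := Finset.sum_erase_add _ _ hz
        have h3 : 0 < 4 ^ z.1.length := by positivity
        omega
      obtain ⟨d, hd1, hd2, hd3⟩ := ih c' hmu' (fun a ha => hsupp
        (by
          have h1 : a ∈ c'.support := Finset.mem_coe.mp ha
          rw [hc', Finsupp.support_erase] at h1
          exact Finset.mem_coe.mpr (Finset.mem_of_mem_erase h1)))
      exact ⟨d, hd1, hd2, hSeq.trans hd3⟩
    · -- a non-root bad node: reduce its coefficient mod p
      set pz := trPred T hclosed z with hpz
      have hpzne : pz ≠ z := by
        intro h
        have := trPred_length T hroot hclosed hzr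
        rw [← hpz, h] at this; omega
      set q : ℤ := c z / (p : ℤ) with hq
      set r : ℤ := c z % (p : ℤ) with hr
      have hdm : (p : ℤ) * q + r = c z := Int.mul_ediv_add_emod _ _
      have hr0 : 0 ≤ r := Int.emod_nonneg _ (ne_of_gt hp')
      have hrp : r < (p : ℤ) := Int.emod_lt_of_pos _ hp'
      set c' : T →₀ ℤ := c + Finsupp.single pz q - Finsupp.single z ((p : ℤ) * q) with hc'
      have hc'z : c' z = r := by
        rw [hc', Finsupp.sub_apply, Finsupp.add_apply, Finsupp.single_apply,
          Finsupp.single_apply, if_neg hpzne, if_pos rfl]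
        omega
      have hc'pz : c' pz = c pz + q := by
        rw [hc', Finsupp.sub_apply, Finsupp.add_apply, Finsupp.single_apply,
          Finsupp.single_apply, if_pos rfl, if_neg (Ne.symm hpzne)]
        omega
      have hc'other : ∀ a, a ≠ z → a ≠ pz → c' a = c a := by
        intro a h1 h2
        rw [hc', Finsupp.sub_apply, Finsupp.add_apply, Finsupp.single_apply,
          Finsupp.single_apply, if_neg (fun h => h2 h.symm), if_neg (fun h => h1 h.symm)]
        omega
      have hSeq : trS p T c = trS p T c' := by
        rw [hc', map_sub, map_add, trS_single, trS_single]
        have hgpz : trG p T pz = (p : ℤ) • trG p T z := by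
          rw [hpz, ← trG_pred p T hroot hclosed z, natCast_zsmul]
        rw [hgpz, smul_smul, mul_comm q]
        abel
      have hsupp' : (↑c'.support : Set T) ⊆ A := by
        intro a ha
        by_cases h1 : a = z
        · exact h1 ▸ hsupp hzsupp
        by_cases h2 : a = pz
        · exact h2 ▸ hA z (hsupp hzsupp)
        · have : c' a = c a := hc'other a h1 h2
          have hmem : a ∈ c.support := by
            rw [Finsupp.mem_support_iff, ← this]
            exact Finsupp.mem_support_iff.mp (Finset.mem_coe.mp ha)
          exact hsupp hmem
      have hsub : trBad p T hroot c' ⊆ insert pz ((trBad p T hroot c).erase z) := by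
        intro a ha
        have ha' := (mem_trBad_iff p T hroot).mp ha
        by_cases h2 : a = pz
        · exact h2 ▸ Finset.mem_insert_self _ _
        by_cases h1 : a = z
        · exfalso
          subst h1
          rcases ha'.2 with h | h | h
          · exact hzr h
          · rw [hc'z] at h; omega
          · rw [hc'z] at h; omega

        · refine Finset.mem_insert_of_mem (Finset.mem_erase.mpr ⟨h1, ?_⟩)
          have hval : c' a = c a := hc'other a h1 h2
          refine (mem_trBad_iff p T hroot).mpr ?_
          rw [← hval]
          exact ha'
      have hlen : pz.1.length < z.1.length := by
        have := trPred_length T hroot hclosed hzr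
        rw [← hpz] at this; omega
      have hmu' : trMu p T hroot c' ≤ n := by
        have h1 : trMu p T hroot c' ≤
            ∑ a ∈ insert pz ((trBad p T hroot c).erase z), 4 ^ a.1.length :=
          Finset.sum_le_sum_of_subset hsub
        have h2 : (∑ a ∈ insert pz ((trBad p T hroot c).erase z), 4 ^ a.1.length) ≤
            4 ^ pz.1.length + ∑ a ∈ (trBad p T hroot c).erase z, 4 ^ a.1.length := by
          by_cases hmem : pz ∈ (trBad p T hroot c).erase z
          · rw [Finset.insert_eq_self.mpr hmem]; exact Nat.le_add_left _ _
          · rw [Finset.sum_insert hmem]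
        have h3 : (∑ a ∈ (trBad p T hroot c).erase z, 4 ^ a.1.length) + 4 ^ z.1.length =
            trMu p T hroot c := Finset.sum_erase_add _ _ hz
        have h4 : 4 ^ pz.1.length < 4 ^ z.1.length :=
          Nat.pow_lt_pow_right (by norm_num) hlen
        omega
      obtain ⟨d, hd1, hd2, hd3⟩ := ih c' hmu' hsupp'
      exact ⟨d, hd1, hd2, hSeq.trans hd3⟩

end Tree3

section Tree4

variable (p : ℕ) (T : Set (List ℕ))
    (hroot : ([] : List ℕ) ∈ T)
    (hclosed : ∀ l ∈ T, ∀ l' : List ℕ, l' <+: l → l' ∈ T)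

lemma trS_mem_closure (A : Set T) (c : T →₀ ℤ) (hc : (↑c.support : Set T) ⊆ A) :
    trS p T c ∈ AddSubgroup.closure (trG p T '' A) := by
  rw [trS_eq_sum, Finsupp.sum]
  refine AddSubgroup.sum_mem _ fun a ha => ?_
  exact AddSubgroup.zsmul_mem _ (AddSubgroup.subset_closure (Set.mem_image_of_mem _ (hc (Finset.mem_coe.mpr ha)))) _

lemma mem_closure_trS (A : Set T) {h : treeGroup p T}
    (hh : h ∈ AddSubgroup.closure (trG p T '' A)) :
    ∃ c : T →₀ ℤ, (↑c.support : Set T) ⊆ A ∧ trS p T c = h := by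
  induction hh using AddSubgroup.closure_induction with
  | mem x hx =>
    obtain ⟨a, haA, rfl⟩ := hx
    refine ⟨Finsupp.single a 1, ?_, by rw [trS_single, one_smul]⟩
    intro b hb
    have := Finsupp.support_single_subset (Finset.mem_coe.mp hb)
    rw [Finset.mem_singleton] at this
    exact this ▸ haA
  | zero => exact ⟨0, by simp, by simp⟩
  | add x y hx hy ihx ihy =>
    obtain ⟨c1, hc1, rfl⟩ := ihx
    obtain ⟨c2, hc2, rfl⟩ := ihy
    refine ⟨c1 + c2, ?_, by rw [map_add]⟩
    intro b hb
    have := Finsupp.support_add (Finset.mem_coe.mp hb)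
    rcases Finset.mem_union.mp this with h | h
    · exact hc1 h
    · exact hc2 h
  | neg x hx ihx =>
    obtain ⟨c1, hc1, rfl⟩ := ihx
    exact ⟨-c1, by simpa using hc1, by rw [map_neg]⟩

include hclosed in
lemma mem_closure_nf (hp : 2 ≤ p) (A : Set T) (hA : ∀ x ∈ A, trPred T hclosed x ∈ A)
    {h : treeGroup p T} (hh : h ∈ AddSubgroup.closure (trG p T '' A)) :
    ∃ c : T →₀ ℤ, trNf p T hroot c ∧ (↑c.support : Set T) ⊆ A ∧ trS p T c = h := by
  obtain ⟨c, hc1, hc2⟩ := mem_closure_trS p T A hh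
  obtain ⟨d, hd1, hd2, hd3⟩ := trNf_exists_aux p T hroot hclosed hp A hA
    (trMu p T hroot c) c le_rfl hc1
  exact ⟨d, hd1, hd2, hd3 ▸ hc2⟩

include hroot hclosed in
lemma trG_torsion (x : T) : p ^ x.1.length • trG p T x = 0 := by
  obtain ⟨n, hn⟩ : ∃ n, x.1.length = n := ⟨_, rfl⟩
  induction n generalizing x with
  | zero =>
    have : x = trRoot T hroot := Subtype.ext (List.length_eq_zero_iff.mp hn)
    rw [hn, this, trG_root p T hroot, pow_zero, one_smul]
  | succ n ih =>
    have hxr : x ≠ trRoot T hroot := by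
      intro h; rw [h] at hn; simp [trRoot] at hn
    have hlen : (trPred T hclosed x).1.length = n := by
      have := trPred_length T hroot hclosed hxr
      omega
    rw [hn, pow_succ, mul_smul, trG_pred p T hroot hclosed x, ← hlen]
    exact ih _ hlen

include hroot hclosed in
lemma tr_pgroup : IsAbelianPGroup p (treeGroup p T) := by
  intro h
  refine QuotientAddGroup.induction_on h ?_
  intro a
  refine FreeAbelianGroup.induction_on
    (motive := fun a => ∃ n : ℕ, p ^ n • trQ p T a = 0) a ⟨0, by simp⟩ ?_ ?_ ?_
  · intro x
    refine ⟨x.1.length, ?_⟩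
    have := trG_torsion p T hroot hclosed x
    rw [trG] at this
    rw [← map_nsmul] at this
    exact this
  · rintro x ⟨n, hn⟩
    refine ⟨n, ?_⟩
    rw [map_neg, smul_neg, neg_eq_zero]
    exact hn
  · rintro a b ⟨n, hn⟩ ⟨m, hm⟩
    refine ⟨n + m, ?_⟩
    rw [map_add, smul_add]
    have h1 : p ^ (n + m) • trQ p T a = 0 := by rw [pow_add, mul_comm, mul_smul, hn, smul_zero]
    have h2 : p ^ (n + m) • trQ p T b = 0 := by rw [pow_add, mul_smul, hm, smul_zero]
    rw [h1, h2, add_zero]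

end Tree4

section Tree5

variable (p : ℕ) (T : Set (List ℕ))
    (hroot : ([] : List ℕ) ∈ T)
    (hclosed : ∀ l ∈ T, ∀ l' : List ℕ, l' <+: l → l' ∈ T)

/-- The child relation on nodes of the tree. -/
def chRel : T → T → Prop := fun c y => c.1 ≠ [] ∧ c.1.dropLast = y.1

include hclosed in
lemma chRel_wf (hnp : ¬ ∃ f : ℕ → ℕ, ∀ n : ℕ, (List.range n).map f ∈ T) :
    WellFounded (chRel T) := by
  by_contra hwf
  have hex : ∃ x : T, ¬ Acc (chRel T) x := by
    by_contra hall; push_neg at hall; exact hwf ⟨hall⟩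
  obtain ⟨x0, hx0⟩ := hex
  have hstep' : ∀ x : {a : T // ¬Acc (chRel T) a}, ∃ y : {a : T // ¬Acc (chRel T) a},
      chRel T y.1 x.1 := by
    rintro ⟨x, hx⟩
    obtain ⟨y, hy1, hy2⟩ := exists_not_acc_lt_of_not_acc hx
    exact ⟨⟨y, hy1⟩, hy2⟩
  choose nxt hnxt using hstep'
  set seq : ℕ → {a : T // ¬Acc (chRel T) a} := fun n => nxt^[n] ⟨x0, hx0⟩ with hseq
  have hchain : ∀ n, chRel T (seq (n+1)).1 (seq n).1 := by
    intro n
    have : seq (n+1) = nxt (seq n) := by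
      rw [hseq]
      simp only [Function.iterate_succ, Function.comp_apply]
      rw [← Function.iterate_succ_apply, Function.iterate_succ_apply']
    rw [this]
    exact hnxt (seq n)
  set L : ℕ → List ℕ := fun n => ((seq n).1 : T).1 with hL
  have hstep : ∀ n : ℕ, L (n + 1) ≠ [] ∧ (L (n + 1)).dropLast = L n := fun n => hchain n
  have hmemT : ∀ n, L n ∈ T := fun n => ((seq n).1 : T).2
  have hlen : ∀ n, (L n).length = (L 0).length + n := by
    intro n
    induction n with
    | zero => rfl
    | succ n ih =>
      have h1 := (hstep n).2
      have h2 : (L (n+1)).dropLast.length = (L (n+1)).length - 1 := List.length_dropLast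
      have h3 : 0 < (L (n+1)).length := List.length_pos_iff.mpr (hstep n).1
      rw [h1] at h2
      omega
  have hpre : ∀ n m : ℕ, m ≤ n → L m <+: L n := by
    intro n
    induction n with
    | zero => intro m hm; rw [Nat.le_zero.mp hm]
    | succ n ih =>
      intro m hm
      by_cases h : m = n + 1
      · rw [h]
      · have hmn : m ≤ n := by omega
        exact (ih m hmn).trans ((hstep n).2 ▸ (L (n+1)).dropLast_prefix)
  apply hnp
  refine ⟨fun k => (L (k + 1)).getD k 0, fun n => ?_⟩
  have heq : (List.range n).map (fun k => (L (k + 1)).getD k 0) = (L n).take n := by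
    apply List.ext_getElem
    · simp [hlen n]
    · intro k h1 h2
      simp only [List.getElem_map, List.getElem_range, List.getElem_take]
      have hk : k < n := by simpa using h1
      have hkl : k < (L (k + 1)).length := by rw [hlen]; omega
      rw [List.getD_eq_getElem _ _ hkl]
      exact List.IsPrefix.getElem (hpre n (k+1) hk) hkl
  rw [heq]
  exact hclosed (L n) (hmemT n) _ (List.take_prefix n (L n))

/-- Rank of a node with respect to the (well-founded) child relation. -/
noncomputable def trRk (hWF : WellFounded (chRel T)) (x : T) : Ordinal.{0} :=
  (hWF.apply x).rank

lemma trRk_lt (hWF : WellFounded (chRel T)) {c y : T} (h : chRel T c y) :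
    trRk T hWF c < trRk T hWF y := by
  exact Acc.rank_lt_of_rel (hWF.apply y) h

lemma trRk_exists_child (hWF : WellFounded (chRel T)) {y : T} {β : Ordinal.{0}}
    (h : β < trRk T hWF y) : ∃ c : T, chRel T c y ∧ β ≤ trRk T hWF c := by
  rw [trRk, Acc.rank_eq] at h
  rw [Ordinal.lt_iSup_iff] at h
  obtain ⟨⟨c, hc⟩, hlt⟩ := h
  refine ⟨c, hc, ?_⟩
  rw [Order.lt_succ_iff] at hlt
  exact hlt

lemma closure_range_trG : AddSubgroup.closure (Set.range (trG p T)) = ⊤ := by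
  rw [eq_top_iff]
  intro h _
  refine QuotientAddGroup.induction_on h ?_
  intro a
  refine FreeAbelianGroup.induction_on
    (motive := fun a => trQ p T a ∈ AddSubgroup.closure (Set.range (trG p T))) a ?_ ?_ ?_ ?_
  · simpa using zero_mem _
  · intro x; exact AddSubgroup.subset_closure ⟨x, rfl⟩
  · intro x hx; rw [map_neg]; exact neg_mem hx
  · intro a b ha hb; rw [map_add]; exact add_mem ha hb

include hroot in
lemma trG_ne_zero (hp : 2 ≤ p) (x : T) (hx : x ≠ trRoot T hroot) : trG p T x ≠ 0 := by
  intro h0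
  have h1 : trS p T (Finsupp.single x 1) = trS p T 0 := by
    rw [trS_single, one_smul, h0, map_zero]
  have hnf1 : trNf p T hroot (Finsupp.single x 1) := by
    constructor
    · rw [Finsupp.single_apply, if_neg (fun h => hx h)]
    · intro z
      rw [Finsupp.single_apply]
      by_cases h : x = z <;> simp [h] <;> omega
  have hnf0 : trNf p T hroot (0 : T →₀ ℤ) := by
    constructor
    · simp
    · intro z; simp; omega
  have := trNf_unique p T hroot hp hnf1 hnf0 h1
  have h2 := Finsupp.single_eq_zero.mp this
  omega

include hroot hclosed in
lemma path_mem_ulm (f : ℕ → ℕ) (hf : ∀ n : ℕ, (List.range n).map f ∈ T)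
    (β : Ordinal.{0}) :
    ∀ n : ℕ, trG p T ⟨(List.range n).map f, hf n⟩ ∈ ulmSub p (treeGroup p T) β := by
  induction β using Ordinal.limitRecOn with
  | zero => intro n; rw [ulmSub_zero']; exact AddSubgroup.mem_top _
  | add_one β ih =>
    intro n
    rw [ulmSub_succ]
    have hpred : trPred T hclosed ⟨(List.range (n+1)).map f, hf (n+1)⟩ =
        ⟨(List.range n).map f, hf n⟩ := by
      apply Subtype.ext
      show ((List.range (n+1)).map f).dropLast = (List.range n).map f
      rw [List.range_succ, List.map_append]
      simp
    refine AddSubgroup.mem_map.mpr ⟨trG p T ⟨(List.range (n+1)).map f, hf (n+1)⟩, ih (n+1), ?_⟩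
    rw [pHom_apply, trG_pred p T hroot hclosed, hpred]
  | limit β hβ ih =>
    intro n
    rw [ulmSub_limit' p _ β hβ]
    refine AddSubgroup.mem_iInf.mpr fun γ => AddSubgroup.mem_iInf.mpr fun hγ => ih γ hγ n

include hroot hclosed in
lemma ulm_eq_closure (hp : 2 ≤ p) (hWF : WellFounded (chRel T)) (β : Ordinal.{0}) :
    ulmSub p (treeGroup p T) β =
      AddSubgroup.closure (trG p T '' {x : T | β ≤ trRk T hWF x}) := by
  have hpredmem : ∀ (γ : Ordinal.{0}), ∀ x ∈ {x : T | γ ≤ trRk T hWF x},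
      trPred T hclosed x ∈ {x : T | γ ≤ trRk T hWF x} := by
    intro γ x hx
    by_cases hxr : x = trRoot T hroot
    · rw [hxr, trPred_root]; rwa [hxr] at hx
    · have hch : chRel T x (trPred T hclosed x) := ⟨fun h => hxr (Subtype.ext h), rfl⟩
      exact le_trans hx (le_of_lt (trRk_lt T hWF hch))
  induction β using Ordinal.limitRecOn with
  | zero =>
    rw [ulmSub_zero']
    have : {x : T | (0:Ordinal.{0}) ≤ trRk T hWF x} = Set.univ := by
      ext x; simp [zero_le]
    rw [this, Set.image_univ, closure_range_trG]
  | add_one β ih =>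
    rw [ulmSub_succ, ih, AddMonoidHom.map_closure]
    have himg : (pHom p (treeGroup p T)) '' (trG p T '' {x : T | β ≤ trRk T hWF x}) =
        (fun x => trG p T (trPred T hclosed x)) '' {x : T | β ≤ trRk T hWF x} := by
      rw [Set.image_image]
      apply Set.image_congr
      intro x _
      rw [pHom_apply, trG_pred p T hroot hclosed]
    rw [himg]
    apply le_antisymm
    · rw [AddSubgroup.closure_le]
      rintro _ ⟨x, hx, rfl⟩
      by_cases hxr : x = trRoot T hroot
      · show trG p T (trPred T hclosed x) ∈ _
        rw [hxr, trPred_root T hroot hclosed, trG_root p T hroot]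
        exact zero_mem _
      · apply AddSubgroup.subset_closure
        refine ⟨trPred T hclosed x, ?_, rfl⟩
        have hch : chRel T x (trPred T hclosed x) := ⟨fun h => hxr (Subtype.ext h), rfl⟩
        have := trRk_lt T hWF hch
        rw [Set.mem_setOf_eq, Ordinal.add_one_eq_succ, Order.succ_le_iff]
        exact lt_of_le_of_lt hx this
    · rw [AddSubgroup.closure_le]
      rintro _ ⟨y, hy, rfl⟩
      rw [Set.mem_setOf_eq, Ordinal.add_one_eq_succ, Order.succ_le_iff] at hy
      obtain ⟨c, hch, hrk⟩ := trRk_exists_child T hWF hy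
      have hpc : trPred T hclosed c = y := Subtype.ext hch.2
      apply AddSubgroup.subset_closure
      exact ⟨c, hrk, by show trG p T (trPred T hclosed c) = trG p T y; rw [hpc]⟩
  | limit β hβ ih =>
    rw [ulmSub_limit' p _ β hβ]
    apply le_antisymm
    · intro h hmem
      have hh : ∀ γ : Ordinal.{0}, γ < β →
          h ∈ AddSubgroup.closure (trG p T '' {x : T | γ ≤ trRk T hWF x}) := by
        intro γ hγ
        have := (AddSubgroup.mem_iInf.mp hmem) γ
        have := (AddSubgroup.mem_iInf.mp this) hγ
        rwa [ih γ hγ] at this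
      -- get a normal form for h over the whole tree
      have htop : h ∈ AddSubgroup.closure (trG p T '' (Set.univ : Set T)) := by
        rw [Set.image_univ, closure_range_trG]; trivial
      obtain ⟨c, hcNf, _, hcS⟩ := mem_closure_nf p T hroot hclosed hp Set.univ
        (fun x _ => Set.mem_univ _) htop
      have hsupp : ∀ γ : Ordinal.{0}, γ < β →
          (↑c.support : Set T) ⊆ {x : T | γ ≤ trRk T hWF x} := by
        intro γ hγ
        obtain ⟨d, hdNf, hdS, hdeq⟩ := mem_closure_nf p T hroot hclosed hp
          {x : T | γ ≤ trRk T hWF x} (hpredmem γ) (hh γ hγ)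
        have : d = c := trNf_unique p T hroot hp hdNf hcNf (hdeq.trans hcS.symm)
        rwa [this] at hdS
      have hsuppβ : (↑c.support : Set T) ⊆ {x : T | β ≤ trRk T hWF x} := by
        intro z hz
        rw [Set.mem_setOf_eq]
        by_contra hlt
        push_neg at hlt
        have hsucc : trRk T hWF z + 1 < β := by
          rw [Ordinal.add_one_eq_succ]
          exact hβ.succ_lt hlt
        have := hsupp _ hsucc hz
        rw [Set.mem_setOf_eq, Ordinal.add_one_eq_succ, Order.succ_le_iff] at this
        exact lt_irrefl _ this
      rw [← hcS]
      exact trS_mem_closure p T _ c hsuppβ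
    · refine le_iInf fun γ => le_iInf fun hγ => ?_
      rw [ih γ hγ]
      apply AddSubgroup.closure_mono
      apply Set.image_mono
      intro x hx
      exact le_trans (le_of_lt hγ) hx

end Tree5

/-- For a tree `T`, `G(T)` is an abelian `p`-group, and it is reduced iff `T` has no infinite
path. -/
theorem treeGroup_pGroup_and_reduced_iff (p : ℕ) (hp : p.Prime) (T : Set (List ℕ))
    (hroot : ([] : List ℕ) ∈ T)
    (hclosed : ∀ l ∈ T, ∀ l' : List ℕ, l' <+: l → l' ∈ T) :
    IsAbelianPGroup p (treeGroup p T) ∧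
      (IsReducedPGroup p (treeGroup p T) ↔
        ¬ ∃ f : ℕ → ℕ, ∀ n : ℕ, (List.range n).map f ∈ T) := by
  have hp2 : 2 ≤ p := hp.two_le
  refine ⟨tr_pgroup p T hroot hclosed, ?_, ?_⟩
  · -- reduced → no path
    rintro hred ⟨f, hf⟩
    have h1 := path_mem_ulm p T hroot hclosed f hf (ulmLength p (treeGroup p T)) 1
    rw [IsReducedPGroup] at hred
    rw [hred] at h1
    have h2 : trG p T ⟨(List.range 1).map f, hf 1⟩ = 0 := AddSubgroup.mem_bot.mp h1
    have hne : (⟨(List.range 1).map f, hf 1⟩ : T) ≠ trRoot T hroot := by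
      intro h
      have := congrArg Subtype.val h
      simp only [trRoot, List.range_succ, List.range_zero] at this; simp at this
    exact trG_ne_zero p T hroot hp2 _ hne h2
  · -- no path → reduced
    intro hnp
    have hWF := chRel_wf T hclosed hnp
    have hulm := ulm_eq_closure p T hroot hclosed hp2 hWF
    set β₀ : Ordinal.{0} := Order.succ (⨆ x : T, trRk T hWF x) with hβ₀
    have hempty : {x : T | β₀ ≤ trRk T hWF x} = ∅ := by
      ext x
      simp only [Set.mem_setOf_eq, Set.mem_empty_iff_false, iff_false]
      intro h
      have hle : trRk T hWF x ≤ ⨆ x : T, trRk T hWF x :=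
        le_ciSup (Ordinal.bddAbove_range _) x
      have h2 : (⨆ x : T, trRk T hWF x) < trRk T hWF x := Order.succ_le_iff.mp h
      exact absurd (lt_of_lt_of_le h2 hle) (lt_irrefl _)
    have hbot : ulmSub p (treeGroup p T) β₀ = ⊥ := by
      rw [hulm β₀, hempty, Set.image_empty, AddSubgroup.closure_empty]
    have hstabset : β₀ ∈ {β : Ordinal.{0} |
        ulmSub p (treeGroup p T) β = ulmSub p (treeGroup p T) (β + 1)} := by
      have h1 : ulmSub p (treeGroup p T) (β₀ + 1) ≤ ⊥ := hbot ▸ ulmSub_succ_le p _ β₀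
      rw [Set.mem_setOf_eq, hbot]
      exact (le_antisymm h1 bot_le).symm
    have hlam : ulmLength p (treeGroup p T) ∈ {β : Ordinal.{0} |
        ulmSub p (treeGroup p T) β = ulmSub p (treeGroup p T) (β + 1)} :=
      csInf_mem ⟨β₀, hstabset⟩
    have hle : ulmLength p (treeGroup p T) ≤ β₀ := csInf_le' hstabset
    have hstab := ulmSub_stab p (treeGroup p T) (ulmLength p (treeGroup p T))
      hlam β₀ hle
    rw [IsReducedPGroup, ← hstab]
    exact hbot
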